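/- Optimal design transfer (Theorem 'mu to lambda'): Let X ⊂ ℝ^d be finite and spanning, and Z = { vec(x x'^T) : (x,x') ∈ X² } ⊂ ℝ^{d²}. If μ⋆ ∈ simplex(X) minimizes μ ↦ max_{x'∈X} x'^T (Σ_{x} μ_x x x^T)^{-1} x', and λ⋆ ∈ simplex(Z) is defined by λ⋆_{vec(x x'^T)} = μ⋆_x μ⋆_{x'}, then λ⋆ minimizes λ ↦ max_{z'∈Z} z'^T (Σ_{z} λ_z z z^T)^{-1} z' over simplex(Z), and the minimum values are d and d² respectively. -/

import Mathlib

open Matrix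
open scoped Classical

/-- `vec` of a `d × d` matrix, indexed by `Fin d × Fin d`. -/
def matVec {d : ℕ} (B : Matrix (Fin d) (Fin d) ℝ) : Fin d × Fin d → ℝ :=
  fun p => B p.1 p.2

/-- The G-optimal design objective over a finite set of vectors indexed by `ι`:
`h(λ) = max_{z'∈Z} z'ᵀ (Σ_{z∈Z} λ_z z zᵀ)⁻¹ z'` when the covariance matrix is
invertible, and `+∞` otherwise. -/
noncomputable def gObj {ι : Type*} [Fintype ι] [DecidableEq ι]
    (Z : Finset (ι → ℝ)) (hZ : Z.Nonempty) (lam : (ι → ℝ) → ℝ) : EReal :=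
  if IsUnit (∑ z ∈ Z, lam z • vecMulVec z z) then
    ((Z.sup' hZ fun z' => z' ⬝ᵥ (∑ z ∈ Z, lam z • vecMulVec z z)⁻¹.mulVec z' : ℝ) : EReal)
  else ⊤

open scoped Kronecker
set_option linter.unusedSectionVars false

section Helpers

variable {ι κ : Type*} [Fintype ι] [Fintype κ]

lemma trace_mul_vecMulVec (B : Matrix ι ι ℝ) (u v : ι → ℝ) :
    trace (B * vecMulVec u v) = v ⬝ᵥ B.mulVec u := by
  simp only [trace, diag, mul_apply, vecMulVec_apply, dotProduct, mulVec, Finset.mul_sum]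
  apply Finset.sum_congr rfl; intro i _; apply Finset.sum_congr rfl; intro j _; ring

lemma my_sum_mulVec {κ' : Type*} (s : Finset κ') (f : κ' → Matrix ι ι ℝ) (v : ι → ℝ) :
    (∑ k ∈ s, f k) *ᵥ v = ∑ k ∈ s, (f k) *ᵥ v := by
  ext i
  simp only [mulVec, dotProduct, Matrix.sum_apply, Finset.sum_apply, Finset.sum_mul]
  exact Finset.sum_comm

lemma my_dot_sum {κ' : Type*} (s : Finset κ') (f : κ' → ι → ℝ) (v : ι → ℝ) :
    v ⬝ᵥ (∑ k ∈ s, f k) = ∑ k ∈ s, v ⬝ᵥ f k := by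
  simp only [dotProduct, Finset.sum_apply, Finset.mul_sum]
  exact Finset.sum_comm

lemma vecMulVec_mulVec' (u w v : ι → ℝ) :
    (vecMulVec u w) *ᵥ v = (w ⬝ᵥ v) • u := by
  ext i
  simp only [mulVec, dotProduct, vecMulVec_apply, Pi.smul_apply, smul_eq_mul, Finset.sum_mul,
    Finset.mul_sum]
  exact Finset.sum_congr rfl fun j _ => by ring

lemma quad_sum_eq (X : Finset (ι → ℝ)) (w : (ι → ℝ) → ℝ) (v : ι → ℝ) :
    v ⬝ᵥ (∑ x ∈ X, w x • vecMulVec x x) *ᵥ v = ∑ x ∈ X, w x * (x ⬝ᵥ v)^2 := by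
  rw [my_sum_mulVec, my_dot_sum]
  apply Finset.sum_congr rfl
  intro x _
  rw [Matrix.smul_mulVec, dotProduct_smul, vecMulVec_mulVec', dotProduct_smul]
  simp only [smul_eq_mul, dotProduct_comm v x]
  ring

lemma sum_posSemidef (X : Finset (ι → ℝ)) (w : (ι → ℝ) → ℝ)
    (hw : ∀ x ∈ X, 0 ≤ w x) : (∑ x ∈ X, w x • vecMulVec x x).PosSemidef := by
  rw [posSemidef_iff_dotProduct_mulVec]
  constructor
  · ext i j
    simp only [conjTranspose_apply, Matrix.sum_apply, Matrix.smul_apply, vecMulVec_apply,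
      smul_eq_mul, star_trivial]
    exact Finset.sum_congr rfl fun x _ => by ring
  · intro v
    have hstar : star v = v := rfl
    rw [hstar, quad_sum_eq]
    exact Finset.sum_nonneg fun x hx => mul_nonneg (hw x hx) (sq_nonneg _)

lemma sum_posDef (X : Finset (ι → ℝ))
    (hspan : Submodule.span ℝ (X : Set (ι → ℝ)) = ⊤)
    (w : (ι → ℝ) → ℝ) (hw : ∀ x ∈ X, 0 < w x) :
    (∑ x ∈ X, w x • vecMulVec x x).PosDef := by
  rw [posDef_iff_dotProduct_mulVec]
  refine ⟨(sum_posSemidef X w fun x hx => (hw x hx).le).1, fun v hv => ?_⟩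
  have hstar : star v = v := rfl
  rw [hstar, quad_sum_eq]
  rcases (Finset.sum_nonneg fun x hx => mul_nonneg (hw x hx).le (sq_nonneg (x ⬝ᵥ v))).lt_or_eq
    with h | h
  · exact h
  · exfalso
    have hall : ∀ x ∈ X, w x * (x ⬝ᵥ v)^2 = 0 := by
      intro x hx
      have := (Finset.sum_eq_zero_iff_of_nonneg
        (fun x hx => mul_nonneg (hw x hx).le (sq_nonneg (x ⬝ᵥ v)))).mp h.symm
      exact this x hx
    have hdot : ∀ x ∈ X, x ⬝ᵥ v = 0 := by
      intro x hx
      have h0 := hall x hx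
      have := (hw x hx).ne'
      rcases mul_eq_zero.mp h0 with h | h
      · exact absurd h this
      · exact pow_eq_zero_iff (by norm_num) |>.mp h
    have hspan' : ∀ u ∈ Submodule.span ℝ (X : Set (ι → ℝ)), u ⬝ᵥ v = 0 := by
      intro u hu
      induction hu using Submodule.span_induction with
      | mem u hu => exact hdot u hu
      | zero => simp
      | add a b _ _ ha hb => rw [add_dotProduct, ha, hb, add_zero]
      | smul c a _ ha => rw [smul_dotProduct, ha, smul_zero]
    have : v ⬝ᵥ v = 0 := hspan' v (by rw [hspan]; trivial)
    exact hv (dotProduct_self_eq_zero.mp this)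

lemma aux_q_le_d (d : ℕ) (hd : 1 ≤ d) (q : ℝ)
    (h : ∀ t : ℝ, 0 < t → t < 1 → (1-t)^(d-1) * (1 - t + t*q) ≤ 1) : q ≤ d := by
  by_contra hq
  push_neg at hq
  have hd1 : (1:ℝ) ≤ d := by exact_mod_cast hd
  have hq1 : 1 < q := lt_of_le_of_lt hd1 hq
  set c : ℝ := ((d:ℝ)-1)*(q-1) with hc
  have hc0 : 0 ≤ c := mul_nonneg (by linarith) (by linarith)
  set t : ℝ := min (1/2) ((q-d)/(2*(c+1))) with htdef
  have ht0 : 0 < t := lt_min (by norm_num) (div_pos (by linarith) (by linarith))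
  have ht1 : t < 1 := lt_of_le_of_lt (min_le_left _ _) (by norm_num)
  have hth : t ≤ 1/2 := min_le_left _ _
  have htq : t ≤ (q-(d:ℝ))/(2*(c+1)) := min_le_right _ _
  have hb : 1 - ((d:ℝ)-1)*t ≤ (1-t)^(d-1) := by
    have h2 := one_add_mul_le_pow (a := -t) (by linarith) (d-1)
    have hcast : ((d-1 : ℕ) : ℝ) = (d:ℝ) - 1 := by
      push_cast [Nat.cast_sub hd]; ring
    calc 1 - ((d:ℝ)-1)*t = 1 + ((d-1:ℕ):ℝ) * (-t) := by rw [hcast]; ring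
      _ ≤ (1 + -t)^(d-1) := h2
      _ = (1-t)^(d-1) := by ring_nf
  have hkey := h t ht0 ht1
  have hP : (0:ℝ) ≤ 1 - t + t*q := by nlinarith
  have hmain : (1 - ((d:ℝ)-1)*t) * (1 - t + t*q) ≤ 1 :=
    le_trans (mul_le_mul_of_nonneg_right hb hP) hkey
  have h2 : t*(q-(d:ℝ)) ≤ c*t^2 := by nlinarith [hmain]
  have h3 : t * (2*(c+1)) ≤ q - (d:ℝ) := (le_div_iff₀ (by linarith)).mp htq
  nlinarith [mul_le_mul_of_nonneg_right h3 (le_of_lt ht0), sq_nonneg t, mul_pos ht0 ht0]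

variable [DecidableEq ι] [DecidableEq κ]

lemma det_convex_combo (A : Matrix ι ι ℝ) (hA : IsUnit A.det) (x : ι → ℝ) (t : ℝ)
    (hs : 1 - t ≠ 0) :
    ((1-t) • A + t • vecMulVec x x).det
      = (1-t)^(Fintype.card ι) * A.det * (1 + (t/(1-t)) * (x ⬝ᵥ A⁻¹.mulVec x)) := by
  set s : ℝ := 1 - t with hsdef
  have hk : IsUnit ((Units.mk0 s hs : ℝˣ) • A).det := by
    rw [Units.smul_def, det_smul]
    exact (IsUnit.pow _ (Units.mk0 s hs).isUnit).mul hA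
  have hcolrow : t • vecMulVec x x = replicateCol (Fin 1) (t • x) * replicateRow (Fin 1) x := by
    ext i j
    simp [vecMulVec_apply, mul_apply, replicateCol, replicateRow, Fin.sum_univ_one]
    ring
  have hexp : ((Units.mk0 s hs : ℝˣ) • A + replicateCol (Fin 1) (t • x) * replicateRow (Fin 1) x).det
      = ((Units.mk0 s hs : ℝˣ) • A).det
        * (1 + replicateRow (Fin 1) x * ((Units.mk0 s hs : ℝˣ) • A)⁻¹ * replicateCol (Fin 1) (t • x)).det :=
    det_add_replicateCol_mul_replicateRow hk _ _
  have hinv : ((Units.mk0 s hs : ℝˣ) • A)⁻¹ = (Units.mk0 s hs : ℝˣ)⁻¹ • A⁻¹ :=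
    Matrix.inv_smul' A (Units.mk0 s hs) hA
  have honeone : (1 + replicateRow (Fin 1) x * ((Units.mk0 s hs : ℝˣ) • A)⁻¹ * replicateCol (Fin 1) (t • x)).det
      = 1 + (t/s) * (x ⬝ᵥ A⁻¹.mulVec x) := by
    rw [det_unique, Matrix.add_apply, Matrix.one_apply_eq, hinv]
    have : replicateRow (Fin 1) x * ((Units.mk0 s hs : ℝˣ)⁻¹ • A⁻¹) * replicateCol (Fin 1) (t • x)
        = replicateRow (Fin 1) x * replicateCol (Fin 1) (((Units.mk0 s hs : ℝˣ)⁻¹ • A⁻¹).mulVec (t • x)) := by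
      rw [replicateCol_mulVec, Matrix.mul_assoc]
    rw [this, replicateRow_mul_replicateCol_apply]
    simp only [Matrix.smul_mulVec, mulVec_smul, Units.smul_def, Units.val_inv_eq_inv_val,
      Units.val_mk0, dotProduct_smul, smul_eq_mul]
    field_simp
  have hsmul : (Units.mk0 s hs : ℝˣ) • A = s • A := rfl
  calc ((1-t) • A + t • vecMulVec x x).det
      = ((Units.mk0 s hs : ℝˣ) • A + replicateCol (Fin 1) (t • x) * replicateRow (Fin 1) x).det := by
        rw [hsmul, hcolrow, hsdef]
    _ = ((Units.mk0 s hs : ℝˣ) • A).det * (1 + (t/s) * (x ⬝ᵥ A⁻¹.mulVec x)) := by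
        rw [hexp, honeone]
    _ = s^(Fintype.card ι) * A.det * (1 + (t/s) * (x ⬝ᵥ A⁻¹.mulVec x)) := by
        rw [hsmul, det_smul]

lemma gObj_lower (Z : Finset (ι → ℝ)) (hZ : Z.Nonempty) (lam : (ι → ℝ) → ℝ)
    (h0 : ∀ z ∈ Z, 0 ≤ lam z) (h1 : ∑ z ∈ Z, lam z = 1) :
    (Fintype.card ι : EReal) ≤ gObj Z hZ lam := by
  rw [gObj.eq_def]
  split_ifs with hA
  · set A := ∑ z ∈ Z, lam z • vecMulVec z z with hAdef
    have key : (Fintype.card ι : ℝ) ≤ Z.sup' hZ fun z' => z' ⬝ᵥ A⁻¹.mulVec z' := by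
      have htr : (Fintype.card ι : ℝ) = trace (A⁻¹ * A) := by
        rw [Matrix.nonsing_inv_mul _ ((Matrix.isUnit_iff_isUnit_det A).mp hA), trace_one]
      rw [htr, hAdef, Matrix.mul_sum]
      have : ∀ z ∈ Z, trace (A⁻¹ * (lam z • vecMulVec z z)) = lam z * (z ⬝ᵥ A⁻¹.mulVec z) := by
        intro z _
        rw [Matrix.mul_smul, trace_smul, trace_mul_vecMulVec]; rfl
      rw [trace_sum, Finset.sum_congr rfl this]
      calc ∑ z ∈ Z, lam z * (z ⬝ᵥ A⁻¹.mulVec z)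
          ≤ ∑ z ∈ Z, lam z * (Z.sup' hZ fun z' => z' ⬝ᵥ A⁻¹.mulVec z') := by
            apply Finset.sum_le_sum; intro z hz
            exact mul_le_mul_of_nonneg_left
              (Finset.le_sup' (fun z' => z' ⬝ᵥ A⁻¹.mulVec z') hz) (h0 z hz)
        _ = _ := by rw [← Finset.sum_mul, h1, one_mul]
    rw [← EReal.coe_coe_eq_natCast]
    exact EReal.coe_le_coe_iff.mpr key
  · exact le_top

lemma exists_gObj_le_card (X : Finset (ι → ℝ)) (hX : X.Nonempty)
    (hspan : Submodule.span ℝ (X : Set (ι → ℝ)) = ⊤) :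
    ∃ mu : (ι → ℝ) → ℝ, (∀ x ∈ X, 0 ≤ mu x) ∧ (∑ x ∈ X, mu x = 1) ∧
      gObj X hX mu ≤ (Fintype.card ι : EReal) := by
  classical
  haveI hne : Nonempty {x // x ∈ X} := ⟨⟨hX.choose, hX.choose_spec⟩⟩
  set M : ({x // x ∈ X} → ℝ) → Matrix ι ι ℝ :=
    fun w => ∑ x ∈ X.attach, w x • vecMulVec (x : ι → ℝ) x with hM
  have hMcont : Continuous fun w => (M w).det := by
    apply Continuous.matrix_det
    apply continuous_matrix
    intro i j
    simp only [hM, Matrix.sum_apply, Matrix.smul_apply, vecMulVec_apply, smul_eq_mul]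
    exact continuous_finset_sum _ fun x _ => (continuous_apply x).mul continuous_const
  set u0 : {x // x ∈ X} → ℝ := fun _ => (X.card : ℝ)⁻¹ with hu0
  have hcard : (0:ℝ) < X.card := by exact_mod_cast Finset.card_pos.mpr hX
  have hu0mem : u0 ∈ stdSimplex ℝ {x // x ∈ X} := by
    constructor
    · intro x; exact inv_nonneg.mpr hcard.le
    · rw [Finset.sum_const, Finset.card_univ, Fintype.card_coe, nsmul_eq_mul]
      field_simp
  obtain ⟨w0, hw0mem, hmax⟩ := (isCompact_stdSimplex _ _).exists_isMaxOn ⟨u0, hu0mem⟩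
    hMcont.continuousOn
  set A := M w0 with hA
  have hMu0 : M u0 = ∑ x ∈ X, (X.card : ℝ)⁻¹ • vecMulVec x x := by
    simp only [hM]; exact Finset.sum_attach X (fun y => (X.card:ℝ)⁻¹ • vecMulVec y y)
  have hu0pos : (M u0).PosDef := by
    rw [hMu0]; exact sum_posDef X hspan _ fun x _ => inv_pos.mpr hcard
  have hdetpos : 0 < A.det := lt_of_lt_of_le hu0pos.det_pos (hmax hu0mem)
  have hAunit : IsUnit A.det := hdetpos.ne'.isUnit
  have hkey : ∀ x ∈ X, x ⬝ᵥ A⁻¹.mulVec x ≤ (Fintype.card ι : ℝ) := by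
    intro x hx
    rcases Nat.eq_zero_or_pos (Fintype.card ι) with hzero | hpos
    · haveI : IsEmpty ι := Fintype.card_eq_zero_iff.mp hzero
      simp [dotProduct, hzero]
    · apply aux_q_le_d _ hpos
      intro t ht0 ht1
      set x' : {y // y ∈ X} := ⟨x, hx⟩ with hx'
      set wt : {y // y ∈ X} → ℝ :=
        fun y => (1-t) * w0 y + t * (if y = x' then 1 else 0) with hwt
      have hwtmem : wt ∈ stdSimplex ℝ {y // y ∈ X} := by
        constructor
        · intro y
          have h1 : 0 ≤ w0 y := hw0mem.1 y
          have h2 : (0:ℝ) ≤ (if y = x' then (1:ℝ) else 0) := by positivity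
          have h3 : 0 ≤ (1-t) * w0 y := mul_nonneg (by linarith) h1
          have h4 : 0 ≤ t * (if y = x' then (1:ℝ) else 0) := mul_nonneg ht0.le h2
          exact add_nonneg h3 h4
        · simp only [hwt]
          rw [Finset.sum_add_distrib, ← Finset.mul_sum, hw0mem.2, ← Finset.mul_sum,
            Finset.sum_ite_eq' Finset.univ x' (fun _ => (1:ℝ))]
          simp
      have hMwt : M wt = (1-t) • A + t • vecMulVec x x := by
        have step : ∀ y ∈ X.attach, wt y • vecMulVec (y : ι → ℝ) y
            = (1-t) • (w0 y • vecMulVec (y : ι → ℝ) y)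
              + (if y = x' then t • vecMulVec (x : ι → ℝ) x else 0) := by
          intro y _
          simp only [hwt]
          split_ifs with h
          · subst h
            simp [add_smul, mul_smul, hx']
          · simp [add_smul, mul_smul]
        simp only [hM]
        rw [Finset.sum_congr rfl step, Finset.sum_add_distrib, ← Finset.smul_sum,
          Finset.sum_ite_eq' X.attach x' (fun y => t • vecMulVec (x : ι → ℝ) x),
          if_pos (Finset.mem_attach X x')]
      have hdet2 : (M wt).det
          = (1-t)^(Fintype.card ι) * A.det * (1 + (t/(1-t)) * (x ⬝ᵥ A⁻¹.mulVec x)) := by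
        rw [hMwt]; exact det_convex_combo A hAunit x t (by linarith)
      have hle : (M wt).det ≤ A.det := hmax hwtmem
      set q := x ⬝ᵥ A⁻¹.mulVec x with hq
      set D := Fintype.card ι with hD
      have hs : (0:ℝ) < 1 - t := by linarith
      have hexpand : (1-t)^D * (1 + (t/(1-t)) * q) = (1-t)^(D-1) * (1 - t + t*q) := by
        have hpow : (1-t)^D = (1-t)^(D-1) * (1-t) := by
          conv_lhs => rw [show D = (D-1)+1 from (Nat.succ_pred_eq_of_pos hpos).symm]
          rw [pow_succ]
        rw [hpow]
        field_simp
      have hfin : (1-t)^(D-1) * (1 - t + t*q) * A.det ≤ 1 * A.det := by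
        rw [one_mul, ← hexpand]
        calc (1-t)^D * (1 + t/(1-t) * q) * A.det = (M wt).det := by rw [hdet2]; ring
          _ ≤ A.det := hle
      exact le_of_mul_le_mul_right (by linarith [hfin]) hdetpos
  set mu : (ι → ℝ) → ℝ := fun x => if h : x ∈ X then w0 ⟨x, h⟩ else 0 with hmu
  have hsum_eq : ∑ x ∈ X, mu x • vecMulVec x x = A := by
    rw [hA, hM, ← Finset.sum_attach X (fun x => mu x • vecMulVec x x)]
    refine Finset.sum_congr rfl fun x _ => ?_
    simp only [hmu, dif_pos x.2]
  refine ⟨mu, ?_, ?_, ?_⟩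
  · intro x hx
    simp only [hmu, dif_pos hx]
    exact hw0mem.1 _
  · rw [← Finset.sum_attach X mu]
    have : ∀ x ∈ X.attach, mu (x : ι → ℝ) = w0 x := fun x _ => by
      simp only [hmu, dif_pos x.2]
    rw [Finset.sum_congr rfl this, ← Finset.univ_eq_attach]
    exact hw0mem.2
  · rw [gObj.eq_def, hsum_eq, if_pos ((Matrix.isUnit_iff_isUnit_det A).mpr hAunit),
      ← EReal.coe_coe_eq_natCast]
    exact EReal.coe_le_coe_iff.mpr (Finset.sup'_le hX _ hkey)

lemma kron_mulVec (B : Matrix ι ι ℝ) (C : Matrix κ κ ℝ) (u : ι → ℝ) (v : κ → ℝ) :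
    (B ⊗ₖ C) *ᵥ (fun p => u p.1 * v p.2) = fun p => (B *ᵥ u) p.1 * (C *ᵥ v) p.2 := by
  ext ⟨i, j⟩
  simp only [mulVec, dotProduct, kroneckerMap_apply, Fintype.sum_prod_type]
  rw [Finset.sum_mul_sum]
  apply Finset.sum_congr rfl; intro k _; apply Finset.sum_congr rfl; intro l _; ring

lemma prod_dot (u a : ι → ℝ) (v b : κ → ℝ) :
    (fun p : ι × κ => u p.1 * v p.2) ⬝ᵥ (fun p => a p.1 * b p.2) = (u ⬝ᵥ a) * (v ⬝ᵥ b) := by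
  simp only [dotProduct, Fintype.sum_prod_type]
  rw [Finset.sum_mul_sum]
  apply Finset.sum_congr rfl; intro k _; apply Finset.sum_congr rfl; intro l _; ring

lemma kron_quad (B : Matrix ι ι ℝ) (C : Matrix κ κ ℝ) (u : ι → ℝ) (v : κ → ℝ) :
    (fun p : ι × κ => u p.1 * v p.2) ⬝ᵥ (B ⊗ₖ C) *ᵥ (fun p => u p.1 * v p.2)
      = (u ⬝ᵥ B.mulVec u) * (v ⬝ᵥ C.mulVec v) := by
  rw [kron_mulVec, prod_dot]

lemma cov_fiber {α β M : Type*} [AddCommMonoid M] [Module ℝ M]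
    (S : Finset α) (T : Finset β) [DecidableEq β] (f : α → β)
    (hmaps : ∀ a ∈ S, f a ∈ T) (c : α → ℝ) (g : β → M) :
    ∑ b ∈ T, (∑ a ∈ S.filter (fun a => f a = b), c a) • g b = ∑ a ∈ S, c a • g (f a) := by
  rw [← Finset.sum_fiberwise_of_maps_to hmaps (fun a => c a • g (f a))]
  refine Finset.sum_congr rfl fun b hb => ?_
  rw [Finset.sum_smul]
  exact Finset.sum_congr rfl fun a ha => by rw [(Finset.mem_filter.mp ha).2]

lemma cov_kron (X : Finset (ι → ℝ)) (Y : Finset (κ → ℝ)) (mu : (ι → ℝ) → ℝ)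
    (nu : (κ → ℝ) → ℝ) :
    ∑ p ∈ X ×ˢ Y, (mu p.1 * nu p.2) •
        vecMulVec (fun q : ι × κ => p.1 q.1 * p.2 q.2) (fun q => p.1 q.1 * p.2 q.2)
      = (∑ x ∈ X, mu x • vecMulVec x x) ⊗ₖ (∑ y ∈ Y, nu y • vecMulVec y y) := by
  ext ⟨i, j⟩ ⟨k, l⟩
  simp only [Matrix.sum_apply, kroneckerMap_apply, Matrix.smul_apply, vecMulVec_apply,
    smul_eq_mul, Finset.sum_product]
  rw [Finset.sum_mul_sum]
  apply Finset.sum_congr rfl; intro x _; apply Finset.sum_congr rfl; intro y _; ring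

end Helpers

/-- Optimal design transfer (`μ` to `λ`): let `X ⊆ ℝ^d` be finite and spanning and
`Z = {vec(x x'ᵀ) : (x,x') ∈ X²} ⊆ ℝ^{d²}`.  If `μ⋆` minimizes the G-optimal design
objective over the simplex on `X`, then the product distribution `λ⋆` (pushforward
of `μ⋆ ⊗ μ⋆` under `(x,x') ↦ vec(x x'ᵀ)`, i.e. `λ⋆_{vec(x x'ᵀ)} = μ⋆_x μ⋆_{x'}`)
lies in the simplex on `Z` and minimizes the G-optimal design objective over the
simplex on `Z`; moreover the two minimal values are `d` and `d²` respectively. -/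
theorem optimal_design_transfer {d : ℕ}
    (X : Finset (Fin d → ℝ)) (hX : X.Nonempty)
    (hspan : Submodule.span ℝ (X : Set (Fin d → ℝ)) = ⊤)
    (mustar : (Fin d → ℝ) → ℝ)
    (hmu : (∀ x ∈ X, 0 ≤ mustar x) ∧ ∑ x ∈ X, mustar x = 1)
    (hmin : ∀ mu : (Fin d → ℝ) → ℝ,
      (∀ x ∈ X, 0 ≤ mu x) → ∑ x ∈ X, mu x = 1 →
        gObj X hX mustar ≤ gObj X hX mu)
    (Z : Finset (Fin d × Fin d → ℝ))
    (hZdef : Z = (X ×ˢ X).image fun p => matVec (vecMulVec p.1 p.2))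
    (hZne : Z.Nonempty)
    (lamstar : (Fin d × Fin d → ℝ) → ℝ)
    (hlam : ∀ z, lamstar z =
      ∑ p ∈ (X ×ˢ X).filter (fun p => matVec (vecMulVec p.1 p.2) = z),
        mustar p.1 * mustar p.2) :
    ((∀ z ∈ Z, 0 ≤ lamstar z) ∧ ∑ z ∈ Z, lamstar z = 1) ∧
      (∀ lam : (Fin d × Fin d → ℝ) → ℝ,
        (∀ z ∈ Z, 0 ≤ lam z) → ∑ z ∈ Z, lam z = 1 →
          gObj Z hZne lamstar ≤ gObj Z hZne lam) ∧
      gObj X hX mustar = (d : EReal) ∧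
      gObj Z hZne lamstar = ((d ^ 2 : ℕ) : EReal) := by
  classical
  obtain ⟨hmu0, hmu1⟩ := hmu
  have hmaps : ∀ p ∈ X ×ˢ X, matVec (vecMulVec p.1 p.2) ∈ Z := by
    intro p hp
    rw [hZdef]
    exact Finset.mem_image_of_mem _ hp
  have hmv : ∀ u v : Fin d → ℝ,
      matVec (vecMulVec u v) = fun p : Fin d × Fin d => u p.1 * v p.2 := fun u v => rfl
  have part1a : ∀ z ∈ Z, 0 ≤ lamstar z := by
    intro z _
    rw [hlam]
    refine Finset.sum_nonneg fun p hp => ?_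
    obtain ⟨hp1, hp2⟩ := Finset.mem_product.mp (Finset.mem_filter.mp hp).1
    exact mul_nonneg (hmu0 _ hp1) (hmu0 _ hp2)
  have part1b : ∑ z ∈ Z, lamstar z = 1 := by
    rw [Finset.sum_congr rfl fun z _ => hlam z,
      Finset.sum_fiberwise_of_maps_to hmaps (fun p => mustar p.1 * mustar p.2),
      Finset.sum_product, ← Finset.sum_mul_sum, hmu1, mul_one]
  obtain ⟨mu', h0', h1', hle'⟩ := exists_gObj_le_card X hX hspan
  have hcard : ((Fintype.card (Fin d) : ℕ) : EReal) = (d : EReal) := by rw [Fintype.card_fin]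
  have hXval : gObj X hX mustar = (d : EReal) := by
    refine le_antisymm (le_trans (hmin mu' h0' h1') (le_trans hle' (le_of_eq hcard))) ?_
    rw [← hcard]
    exact gObj_lower X hX mustar hmu0 hmu1
  have hXval' := hXval
  rw [gObj.eq_def] at hXval'
  by_cases hAunit : IsUnit (∑ x ∈ X, mustar x • vecMulVec x x)
  swap
  · rw [if_neg hAunit] at hXval'
    exact absurd hXval'.symm (EReal.natCast_ne_top d)
  rw [if_pos hAunit, ← EReal.coe_coe_eq_natCast] at hXval'
  have hsup : (X.sup' hX fun z' =>
      z' ⬝ᵥ (∑ x ∈ X, mustar x • vecMulVec x x)⁻¹.mulVec z') = (d:ℝ) :=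
    EReal.coe_eq_coe_iff.mp hXval'
  have hAdet : IsUnit (∑ x ∈ X, mustar x • vecMulVec x x).det :=
    (Matrix.isUnit_iff_isUnit_det _).mp hAunit
  have hqnn : ∀ x : Fin d → ℝ, 0 ≤ x ⬝ᵥ (∑ x ∈ X, mustar x • vecMulVec x x)⁻¹.mulVec x := by
    intro x
    have := (posSemidef_iff_dotProduct_mulVec.mp (sum_posSemidef X mustar hmu0).inv).2 x
    rwa [show star x = x from rfl] at this
  have hqle : ∀ x ∈ X, x ⬝ᵥ (∑ x ∈ X, mustar x • vecMulVec x x)⁻¹.mulVec x ≤ (d:ℝ) := by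
    intro x hx
    rw [← hsup]
    exact Finset.le_sup' (fun z' => z' ⬝ᵥ (∑ x ∈ X, mustar x • vecMulVec x x)⁻¹.mulVec z') hx
  obtain ⟨x0, hx0X, hx0⟩ := Finset.exists_mem_eq_sup' hX
    (fun z' => z' ⬝ᵥ (∑ x ∈ X, mustar x • vecMulVec x x)⁻¹.mulVec z')
  have hqx0 : x0 ⬝ᵥ (∑ x ∈ X, mustar x • vecMulVec x x)⁻¹.mulVec x0 = (d:ℝ) := by
    rw [← hx0]
    exact hsup
  have hAZ : (∑ z ∈ Z, lamstar z • vecMulVec z z)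
      = (∑ x ∈ X, mustar x • vecMulVec x x) ⊗ₖ (∑ x ∈ X, mustar x • vecMulVec x x) := by
    rw [Finset.sum_congr rfl fun z (_ : z ∈ Z) => by rw [hlam z]]
    rw [cov_fiber (X ×ˢ X) Z (fun p => matVec (vecMulVec p.1 p.2)) hmaps
      (fun p => mustar p.1 * mustar p.2) (fun z => vecMulVec z z)]
    rw [← cov_kron X X mustar mustar]
    rfl
  have hAZdet : IsUnit (∑ z ∈ Z, lamstar z • vecMulVec z z).det := by
    rw [hAZ, det_kronecker]
    exact (hAdet.pow _).mul (hAdet.pow _)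
  have hAZunit : IsUnit (∑ z ∈ Z, lamstar z • vecMulVec z z) :=
    (Matrix.isUnit_iff_isUnit_det _).mpr hAZdet
  have hAZinv : (∑ z ∈ Z, lamstar z • vecMulVec z z)⁻¹
      = (∑ x ∈ X, mustar x • vecMulVec x x)⁻¹ ⊗ₖ (∑ x ∈ X, mustar x • vecMulVec x x)⁻¹ := by
    rw [hAZ, Matrix.inv_kronecker]
  have hqZ : ∀ u v : Fin d → ℝ,
      (matVec (vecMulVec u v)) ⬝ᵥ (∑ z ∈ Z, lamstar z • vecMulVec z z)⁻¹.mulVec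
        (matVec (vecMulVec u v))
      = (u ⬝ᵥ (∑ x ∈ X, mustar x • vecMulVec x x)⁻¹.mulVec u)
        * (v ⬝ᵥ (∑ x ∈ X, mustar x • vecMulVec x x)⁻¹.mulVec v) := by
    intro u v
    rw [hAZinv, hmv]
    exact kron_quad _ _ u v
  have hsupZ : (Z.sup' hZne fun z' =>
      z' ⬝ᵥ (∑ z ∈ Z, lamstar z • vecMulVec z z)⁻¹.mulVec z') = (d:ℝ)^2 := by
    apply le_antisymm
    · apply Finset.sup'_le
      intro z hz
      rw [hZdef] at hz
      obtain ⟨p, hp, rfl⟩ := Finset.mem_image.mp hz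
      obtain ⟨hp1, hp2⟩ := Finset.mem_product.mp hp
      rw [hqZ]
      calc _ ≤ (d:ℝ) * (d:ℝ) :=
            mul_le_mul (hqle _ hp1) (hqle _ hp2) (hqnn _) (Nat.cast_nonneg d)
        _ = (d:ℝ)^2 := (sq (d:ℝ)).symm
    · have hz0 : matVec (vecMulVec x0 x0) ∈ Z :=
        hmaps (x0, x0) (Finset.mem_product.mpr ⟨hx0X, hx0X⟩)
      have hval : (matVec (vecMulVec x0 x0)) ⬝ᵥ
          (∑ z ∈ Z, lamstar z • vecMulVec z z)⁻¹.mulVec (matVec (vecMulVec x0 x0))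
          = (d:ℝ)^2 := by
        rw [hqZ, hqx0, sq]
      calc (d:ℝ)^2 = _ := hval.symm
        _ ≤ _ := Finset.le_sup' (fun z' => z' ⬝ᵥ (∑ z ∈ Z, lamstar z • vecMulVec z z)⁻¹.mulVec z') hz0
  have hZval : gObj Z hZne lamstar = ((d^2 : ℕ) : EReal) := by
    rw [gObj.eq_def, if_pos hAZunit, hsupZ, ← EReal.coe_coe_eq_natCast]
    norm_cast
  refine ⟨⟨part1a, part1b⟩, ?_, hXval, hZval⟩
  intro lam h0 h1
  rw [hZval]
  refine le_trans (le_of_eq ?_) (gObj_lower Z hZne lam h0 h1)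
  rw [show Fintype.card (Fin d × Fin d) = d^2 by simp [Fintype.card_prod, sq]]
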